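/- Conditional spectrum of a min-plus service: for a spectral matrix S (for backlog b) and q ≥ b, defining λ̂_{ij} := sup_{x ∈ U|q}(ψ^S_j(x) ∸ x_i), one has λ̂_{0j} = min{s_{0j}, q + s_{1j}} and, for i > 0, λ̂_{ij} = min{(s_{0j} ∸ q), s_{ij}}. -/

import Mathlib

/-- A cumulative vector: a nondecreasing sequence `ℕ → ℕ∞` starting at `0`. -/
def Cumulative (x : ℕ → ℕ∞) : Prop := x 0 = 0 ∧ Monotone x

/-- `U|q`: cumulative vectors whose first entry is exactly `q`. -/
def UAt (q : ℕ) : Set (ℕ → ℕ∞) := {x | Cumulative x ∧ x 1 = (q : ℕ∞)}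

/-- A spectral matrix for backlog `b`. -/
def SpectralMatrix (b : ℕ) (s : ℕ → ℕ → ℕ∞) : Prop :=
  (∀ i j, j ≤ i → s i j = 0) ∧
  (∀ i j, s i j ≤ s i (j + 1)) ∧
  (∀ i j, s (i + 1) j ≤ s i j) ∧
  (∀ i j, 0 < i → s i j ≤ s 0 j - (b : ℕ∞))

/-- The min-plus service `ψ^S_j(q) = min_i (q_i + s_{ij})`. -/
noncomputable def minPlus (s : ℕ → ℕ → ℕ∞) (q : ℕ → ℕ∞) (j : ℕ) : ℕ∞ :=
  ⨅ i : ℕ, (q i + s i j)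

lemma anti_col (b : ℕ) (s : ℕ → ℕ → ℕ∞) (hs : SpectralMatrix b s) (j : ℕ) :
    Antitone (fun i => s i j) :=
  antitone_nat_of_succ_le (fun i => hs.2.2.1 i j)

/-- Extremal arrival: `0, q, …, q, ∞, ∞, …` with the `q`'s at positions `1..i`. -/
def wit (q i : ℕ) : ℕ → ℕ∞ :=
  fun k => if k = 0 then 0 else if k ≤ i then (q : ℕ∞) else ⊤

lemma wit_mono (q i : ℕ) : Monotone (wit q i) := by
  intro a c hac
  unfold wit
  split_ifs <;> first
    | exact le_rfl
    | (simp; done)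
    | exact le_top
    | (exfalso; omega)

lemma wit_mem (q i : ℕ) (hi : 1 ≤ i) : wit q i ∈ UAt q := by
  refine ⟨⟨by simp [wit], wit_mono q i⟩, ?_⟩
  simp [wit, hi]

lemma minPlus_le (s : ℕ → ℕ → ℕ∞) (x : ℕ → ℕ∞) (j k : ℕ) :
    minPlus s x j ≤ x k + s k j :=
  iInf_le _ k

lemma minPlus_wit (b : ℕ) (s : ℕ → ℕ → ℕ∞) (hs : SpectralMatrix b s) (q i j : ℕ)
    (hi : 1 ≤ i) :
    minPlus s (wit q i) j = min (s 0 j) ((q : ℕ∞) + s i j) := by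
  have hine : i ≠ 0 := by omega
  apply le_antisymm
  · apply le_min
    · calc minPlus s (wit q i) j ≤ wit q i 0 + s 0 j := minPlus_le s _ j 0
        _ = s 0 j := by simp [wit]
    · calc minPlus s (wit q i) j ≤ wit q i i + s i j := minPlus_le s _ j i
        _ = (q : ℕ∞) + s i j := by simp [wit, hine]
  · apply le_iInf; intro k
    unfold wit
    split_ifs with h1 h2
    · subst h1
      simp only [zero_add]; exact min_le_left (s 0 j) ((q : ℕ∞) + s i j)
    · exact le_trans (min_le_right _ _) (add_le_add le_rfl (anti_col b s hs j h2))
    · exact le_top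

/-- The conditional spectrum of a min-plus service:
`λ̂_{0j} = min{s_{0j}, q + s_{1j}}` and, for `i > 0`,
`λ̂_{ij} = min{(s_{0j} ∸ q), s_{ij}}`. -/
theorem minPlus_condSpectrum (b q : ℕ) (hbq : b ≤ q) (s : ℕ → ℕ → ℕ∞)
    (hs : SpectralMatrix b s) (j : ℕ) :
    (⨆ x ∈ UAt q, (minPlus s x j - x 0)) = min (s 0 j) ((q : ℕ∞) + s 1 j) ∧
    ∀ i : ℕ, 0 < i →
      (⨆ x ∈ UAt q, (minPlus s x j - x i)) = min (s 0 j - (q : ℕ∞)) (s i j) := by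
  constructor
  · apply le_antisymm
    · apply iSup₂_le; intro x hx
      obtain ⟨⟨hx0, hmono⟩, hx1⟩ := hx
      rw [hx0, tsub_zero]
      apply le_min
      · exact le_trans (minPlus_le s x j 0) (by rw [hx0, zero_add])
      · exact le_trans (minPlus_le s x j 1) (by rw [hx1])
    · have hle := le_iSup₂ (f := fun x (_ : x ∈ UAt q) => minPlus s x j - x 0)
        (wit q 1) (wit_mem q 1 le_rfl)
      refine le_trans (le_of_eq ?_) hle
      rw [minPlus_wit b s hs q 1 j le_rfl]
      simp [wit]
  · intro i hi
    have hine : i ≠ 0 := by omega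
    apply le_antisymm
    · apply iSup₂_le; intro x hx
      obtain ⟨⟨hx0, hmono⟩, hx1⟩ := hx
      apply le_min
      · apply tsub_le_tsub
        · exact le_trans (minPlus_le s x j 0) (by rw [hx0, zero_add])
        · rw [← hx1]; exact hmono hi
      · rw [tsub_le_iff_left]; exact minPlus_le s x j i
    · have hle := le_iSup₂ (f := fun x (_ : x ∈ UAt q) => minPlus s x j - x i)
        (wit q i) (wit_mem q i hi)
      refine le_trans (le_of_eq ?_) hle
      rw [minPlus_wit b s hs q i j hi]
      have hwi : wit q i i = (q : ℕ∞) := by simp [wit, hine]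
      rw [hwi]
      rcases le_total (s 0 j) ((q : ℕ∞) + s i j) with h | h
      · rw [min_eq_left h, min_eq_left (tsub_le_iff_left.mpr h)]
      · rw [min_eq_right h, min_eq_right (ENat.le_sub_of_add_le_left (by simp) h)]
        exact ((ENat.addLECancellable_of_ne_top (by simp)).add_tsub_cancel_left).symm
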